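/- Let G' be the residual graph of the augmented graph under the local binary length function ℓ, where the edge (s, x_out) is the only outgoing edge of s and is classical (length 1), and every edge (v_out, t) is classical. If the edge (x_out, t) is saturated and d(t) < ∞, then the distance from s to t under ℓ is at least 3, and the 0-th layer L_0 = {v : d(v) = 0} equals {s}. -/

import Mathlib

inductive AugV (V : Type) where
  | s : AugV V
  | t : AugV V
  | inV : V → AugV V
  | outV : V → AugV V
deriving DecidableEq

/-- `CostReach R ℓ a b n`: there is a walk from `a` to `b` along edges of the
relation `R` of total length `n` under the length function `ℓ`. -/
inductive CostReach {α : Type*} (R : α → α → Prop) (ℓ : α → α → ℕ) :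
    α → α → ℕ → Prop
  | refl (a : α) : CostReach R ℓ a a 0
  | tail {a b c : α} {n : ℕ} :
      CostReach R ℓ a b n → R b c → CostReach R ℓ a c (n + ℓ b c)

/-- The shortest-path distance from `a` to `b` under the length function `ℓ`
(`⊤` if `b` is unreachable from `a`). -/
noncomputable def distLen {α : Type*} (R : α → α → Prop) (ℓ : α → α → ℕ)
    (a b : α) : ℕ∞ :=
  sInf {n : ℕ∞ | ∃ m : ℕ, CostReach R ℓ a b m ∧ n = (m : ℕ∞)}

/-- In the residual graph of the augmented graph under the local binary length
function `ℓ` (each residual edge is classical of length `1` or modern; every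
zero-length edge is modern; `(s, x_out)` is the only outgoing edge of `s` and
is classical; every `(v_out, t)` is classical; a modern edge into `w_out`
exists only when `(w_out, t)` is saturated), if `(x_out, t)` is saturated and
`d(t) < ∞`, then the distance from `s` to `t` is at least `3` and the `0`-th
layer `L_0 = {v : d(v) = 0}` equals `{s}`. -/
theorem stmt17 {V : Type} (Ered : AugV V → AugV V → Prop)
    (ℓ : AugV V → AugV V → ℕ) (modern : AugV V → AugV V → Prop)
    (sat : V → Prop) (x : V)
    (hbin : ∀ a b, ℓ a b ≤ 1)
    (hclassical : ∀ a b, ¬ modern a b → ℓ a b = 1)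
    (hzero : ∀ a b, ℓ a b = 0 → modern a b)
    (hs_edge : ∀ a, Ered AugV.s a → a = AugV.outV x)
    (hsx_classical : ¬ modern AugV.s (AugV.outV x))
    (hvt_classical : ∀ v : V, ¬ modern (AugV.outV v) AugV.t)
    (hmodern_sat : ∀ (a : AugV V) (w : V), modern a (AugV.outV w) → sat w)
    (hsat : ∀ w : V, sat w → ¬ Ered (AugV.outV w) AugV.t)
    (hstructure : ∀ a b, Ered a b →
      (a = AugV.s ∧ b = AugV.outV x) ∨
      (∃ v w, a = AugV.inV v ∧ b = AugV.outV w) ∨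
      (∃ v w, a = AugV.outV v ∧ b = AugV.inV w) ∨
      (∃ v, a = AugV.outV v ∧ b = AugV.t) ∨
      (∃ v, a = AugV.outV v ∧ b = AugV.s) ∨
      (∃ v, a = AugV.t ∧ b = AugV.outV v))
    (hsatx : sat x)
    (hfinite : distLen Ered ℓ AugV.s AugV.t ≠ ⊤) :
    3 ≤ distLen Ered ℓ AugV.s AugV.t ∧
      {v : AugV V | distLen Ered ℓ AugV.s v = 0} = {AugV.s} := by
  classical
  set f : AugV V → ℕ := fun a => match a with
    | AugV.s => 0
    | AugV.t => 3
    | AugV.inV _ => 1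
    | AugV.outV v => if sat v then 1 else 2 with hf
  have hedge : ∀ a b, Ered a b → f b ≤ f a + ℓ a b := by
    intro a b hab
    rcases hstructure a b hab with ⟨ha, hb⟩ | ⟨v, w, ha, hb⟩ | ⟨v, w, ha, hb⟩ |
      ⟨v, ha, hb⟩ | ⟨v, ha, hb⟩ | ⟨v, ha, hb⟩ <;> subst ha <;> subst hb
    · simp [f, hsatx, hclassical _ _ hsx_classical]
    · by_cases hw : sat w
      · simp [f, hw]
      · have hm : ¬ modern (AugV.inV v) (AugV.outV w) :=
          fun h => hw (hmodern_sat _ _ h)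
        simp [f, hw, hclassical _ _ hm]
    · by_cases hv : sat v <;> simp [f, hv] <;> omega
    · have hv : ¬ sat v := fun h => hsat v h hab
      simp [f, hv, hclassical _ _ (hvt_classical v)]
    · simp [f]
    · by_cases hv : sat v <;> simp [f, hv] <;> omega
  have hreach : ∀ b n, CostReach Ered ℓ AugV.s b n → f b ≤ n := by
    intro b n h
    induction h with
    | refl => simp [f]
    | tail h hbc ih =>
      have := hedge _ _ hbc
      omega
  have hzeroreach : ∀ v n, CostReach Ered ℓ AugV.s v n → n = 0 → v = AugV.s := by
    intro v n h
    induction h with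
    | refl => intro _; rfl
    | tail h hbc ih =>
      intro hn
      rename_i a b n'
      have hn' : n' = 0 ∧ ℓ a b = 0 := by omega
      have hb : a = AugV.s := ih hn'.1
      subst hb
      have hc := hs_edge b hbc
      subst hc
      have : ℓ AugV.s (AugV.outV x) = 1 := hclassical _ _ hsx_classical
      omega
  constructor
  · apply le_sInf
    rintro n ⟨m, hm, rfl⟩
    have := hreach _ _ hm
    simp only [f] at this
    exact_mod_cast this
  · ext v
    simp only [Set.mem_setOf_eq, Set.mem_singleton_iff]
    constructor
    · intro hv
      by_contra hne
      have h1 : (1 : ℕ∞) ≤ distLen Ered ℓ AugV.s v := by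
        apply le_sInf
        rintro n ⟨m, hm, rfl⟩
        by_contra hlt
        push_neg at hlt
        have hm0 : m = 0 := by
          have : (m : ℕ∞) < 1 := hlt
          exact_mod_cast Nat.lt_one_iff.mp (by exact_mod_cast this)
        exact hne (hzeroreach v m hm hm0)
      rw [hv] at h1
      simp at h1
    · rintro rfl
      refine le_antisymm ?_ zero_le
      exact sInf_le ⟨0, CostReach.refl _, rfl⟩
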